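/- Let X be a topological space and x₀ ∈ X. Then X is a small loop transfer space at x₀ with respect to loops (SLTL at x₀) if and only if π₁^{wh}(X, x₀) is a topological group (i.e., multiplication and inversion are continuous with respect to the whisker topology). -/

import Mathlib

open TopologicalSpace

attribute [local instance] Path.Homotopic.setoid

/-- The homotopy class of a loop, as an element of the fundamental group. -/
noncomputable def loopClass {X : Type*} [TopologicalSpace X] {x : X} (γ : Path x x) :
    FundamentalGroup X x :=
  FundamentalGroup.fromPath (X := TopCat.of X) ⟦γ⟧

/-- `α` is a small loop transfer (SLT) path: for every open neighborhood `U` of `α 0`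
there is an open neighborhood `V` of `α 1` such that every loop at `α 1` inside `V` is
path-homotopic to some loop at `α 0` inside `U` conjugated along `α`. -/
def IsSLTPath {X : Type*} [TopologicalSpace X] {x₀ x₁ : X} (α : Path x₀ x₁) : Prop :=
  ∀ U : Set X, IsOpen U → x₀ ∈ U →
    ∃ V : Set X, IsOpen V ∧ x₁ ∈ V ∧
      ∀ γ : Path x₁ x₁, (∀ t, γ t ∈ V) →
        ∃ γ' : Path x₀ x₀, (∀ t, γ' t ∈ U) ∧
          γ'.Homotopic ((α.trans γ).trans α.symm)

/-- `X` is a small loop transfer space at `x₀`: every path starting at `x₀` is an SLT path. -/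
def IsSLTAt (X : Type*) [TopologicalSpace X] (x₀ : X) : Prop :=
  ∀ (x₁ : X) (α : Path x₀ x₁), IsSLTPath α

/-- `X` is SLTL at `x₀`: every loop based at `x₀` is an SLT path. -/
def IsSLTLAt (X : Type*) [TopologicalSpace X] (x₀ : X) : Prop :=
  ∀ γ : Path x₀ x₀, IsSLTPath γ

/-- `X` is SLTP at `x₀`: every non-loop path starting at `x₀` is an SLT path. -/
def IsSLTPAt (X : Type*) [TopologicalSpace X] (x₀ : X) : Prop :=
  ∀ (x₁ : X) (α : Path x₀ x₁), x₁ ≠ x₀ → IsSLTPath α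

/-- The set of homotopy classes of loops based at `x₀` with image contained in `U`;
this is the image `i₊π₁(U, x₀)` of the homomorphism induced by the inclusion `U → X`. -/
noncomputable def loopClassesIn {X : Type*} [TopologicalSpace X] (x₀ : X) (U : Set X) :
    Set (FundamentalGroup X x₀) :=
  { g | ∃ γ : Path x₀ x₀, (∀ t, γ t ∈ U) ∧ g = loopClass γ }

/-- The quotient topology on the fundamental group, coinduced by the map from the loop
space (with the compact-open topology) sending a loop to its homotopy class. -/
noncomputable def qtop (X : Type*) [TopologicalSpace X] (x₀ : X) :
    TopologicalSpace (FundamentalGroup X x₀) :=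
  coinduced (fun γ : Path x₀ x₀ => loopClass γ) inferInstance

/-- The whisker topology on the fundamental group, generated by the basis of cosets
`[α] · i₊π₁(U, x₀)` for `U` an open neighborhood of `x₀`. -/
noncomputable def whTop (X : Type*) [TopologicalSpace X] (x₀ : X) :
    TopologicalSpace (FundamentalGroup X x₀) :=
  generateFrom { S | ∃ (g : FundamentalGroup X x₀) (U : Set X), IsOpen U ∧ x₀ ∈ U ∧
      S = (fun h => g * h) '' loopClassesIn x₀ U }

/-- A loop based at `x` is small if every open neighborhood of `x` contains a
representative of its homotopy class. -/
def IsSmallLoop {X : Type*} [TopologicalSpace X] {x : X} (γ : Path x x) : Prop :=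
  ∀ U : Set X, IsOpen U → x ∈ U →
    ∃ δ : Path x x, (∀ t, δ t ∈ U) ∧ δ.Homotopic γ

/-- `π₁ˢ(X, x)`: the set of homotopy classes of small loops based at `x`. -/
noncomputable def pi1s {X : Type*} [TopologicalSpace X] (x : X) :
    Set (FundamentalGroup X x) :=
  { g | ∃ γ : Path x x, IsSmallLoop γ ∧ g = loopClass γ }

/-- `π₁ˢᵍ(X, x₀)`: the subgroup generated by classes `[α * β * α⁻¹]` where `α` is a path
starting at `x₀` and `β` is a small loop based at `α 1`. -/
noncomputable def pi1sg {X : Type*} [TopologicalSpace X] (x₀ : X) :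
    Subgroup (FundamentalGroup X x₀) :=
  Subgroup.closure { g | ∃ (x₁ : X) (α : Path x₀ x₁) (β : Path x₁ x₁), IsSmallLoop β ∧
      g = loopClass ((α.trans β).trans α.symm) }

/-- The path Spanier group of a path open cover `V` at `x₀`: the subgroup generated by the
classes `[α * β * α⁻¹]` where `α` is a path starting at `x₀` and `β` is a loop based at
`α 1` with image inside `V α`. -/
noncomputable def pathSpanierGroup {X : Type*} [TopologicalSpace X] (x₀ : X)
    (V : ∀ x₁ : X, Path x₀ x₁ → Set X) : Subgroup (FundamentalGroup X x₀) :=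
  Subgroup.closure { g | ∃ (x₁ : X) (α : Path x₀ x₁) (β : Path x₁ x₁),
      (∀ t, β t ∈ V x₁ α) ∧ g = loopClass ((α.trans β).trans α.symm) }

/-- `X` is small "small loop" transfer (SSLT) at `x₀`. -/
def IsSSLTAt (X : Type*) [TopologicalSpace X] (x₀ : X) : Prop :=
  ∀ (x₁ : X) (α : Path x₀ x₁) (U : Set X), IsOpen U → x₀ ∈ U →
    ∃ V : Set X, IsOpen V ∧ x₁ ∈ V ∧
      ∀ β : Path x₁ x₁, IsSmallLoop β → (∀ t, β t ∈ V) →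
        ∃ γ : Path x₀ x₀, (∀ t, γ t ∈ U) ∧
          γ.Homotopic ((α.trans β).trans α.symm)

/-- `X` is semilocally small generated: every point has an open neighborhood `U` with
`i₊π₁(U, x) ≤ π₁ˢᵍ(X, x)`. -/
noncomputable def SemilocallySmallGenerated (X : Type*) [TopologicalSpace X] : Prop :=
  ∀ x : X, ∃ U : Set X, IsOpen U ∧ x ∈ U ∧ loopClassesIn x U ⊆ (pi1sg x : Set (FundamentalGroup X x))

section Helpers
open CategoryTheory
variable {X : Type*} [TopologicalSpace X] {x₀ : X}

lemma loopClass_eq_iff {γ δ : Path x₀ x₀} : loopClass γ = loopClass δ ↔ γ.Homotopic δ :=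
  ⟨fun h => Quotient.exact h, fun h => Quotient.sound h⟩

lemma loopClass_refl : loopClass (Path.refl x₀) = (1 : FundamentalGroup X x₀) :=
  rfl

lemma loopClass_trans (γ δ : Path x₀ x₀) :
    loopClass (γ.trans δ) = loopClass δ * loopClass γ :=
  rfl

lemma loopClass_symm (γ : Path x₀ x₀) : loopClass γ.symm = (loopClass γ)⁻¹ := by
  have h : loopClass γ.symm * loopClass γ = 1 := by
    rw [← loopClass_trans, ← loopClass_refl]
    exact loopClass_eq_iff.mpr ⟨(Path.Homotopy.reflTransSymm γ).symm⟩
  exact eq_inv_of_mul_eq_one_left h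

lemma loopClass_surjective (g : FundamentalGroup X x₀) : ∃ γ : Path x₀ x₀, loopClass γ = g := by
  obtain ⟨γ, hγ⟩ := Quotient.exists_rep g
  exact ⟨γ, hγ⟩

lemma loopClass_conj (α γ : Path x₀ x₀) :
    loopClass ((α.trans γ).trans α.symm) = (loopClass α)⁻¹ * loopClass γ * loopClass α := by
  rw [loopClass_trans, loopClass_trans, loopClass_symm, mul_assoc]

lemma path_trans_mem {x y z : X} {U : Set X} {p : Path x y} {q : Path y z}
    (hp : ∀ t, p t ∈ U) (hq : ∀ t, q t ∈ U) : ∀ t, (p.trans q) t ∈ U := by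
  intro t
  rw [Path.trans_apply]
  split_ifs with h
  exacts [hp _, hq _]

lemma one_mem_L {U : Set X} (hU : x₀ ∈ U) : (1 : FundamentalGroup X x₀) ∈ loopClassesIn x₀ U :=
  ⟨Path.refl x₀, fun _ => hU, loopClass_refl.symm⟩

lemma mul_mem_L {U : Set X} {a b : FundamentalGroup X x₀}
    (ha : a ∈ loopClassesIn x₀ U) (hb : b ∈ loopClassesIn x₀ U) :
    a * b ∈ loopClassesIn x₀ U := by
  obtain ⟨γ, hγ, rfl⟩ := ha
  obtain ⟨δ, hδ, rfl⟩ := hb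
  exact ⟨δ.trans γ, path_trans_mem hδ hγ, (loopClass_trans δ γ).symm⟩

lemma inv_mem_L {U : Set X} {a : FundamentalGroup X x₀}
    (ha : a ∈ loopClassesIn x₀ U) : a⁻¹ ∈ loopClassesIn x₀ U := by
  obtain ⟨γ, hγ, rfl⟩ := ha
  exact ⟨γ.symm, fun t => by rw [Path.symm_apply]; exact hγ _, (loopClass_symm γ).symm⟩

lemma L_mono {U V : Set X} (h : U ⊆ V) : loopClassesIn x₀ U ⊆ loopClassesIn x₀ V :=
  fun _ ⟨γ, hγ, hg⟩ => ⟨γ, fun t => h (hγ t), hg⟩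

lemma mem_coset_iff {g x : FundamentalGroup X x₀} {S : Set (FundamentalGroup X x₀)} :
    x ∈ (fun h => g * h) '' S ↔ g⁻¹ * x ∈ S := by
  constructor
  · rintro ⟨y, hy, rfl⟩; simpa only [inv_mul_cancel_left] using hy
  · intro h; exact ⟨g⁻¹ * x, h, by group⟩

lemma coset_subset {U : Set X} {g a : FundamentalGroup X x₀}
    (ha : a ∈ (fun h => g * h) '' loopClassesIn x₀ U) :
    (fun h => a * h) '' loopClassesIn x₀ U ⊆ (fun h => g * h) '' loopClassesIn x₀ U := by
  rintro _ ⟨v, hv, rfl⟩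
  rw [mem_coset_iff] at ha ⊢
  have : g⁻¹ * (a * v) = (g⁻¹ * a) * v := by group
  rw [this]
  exact mul_mem_L ha hv

lemma whTop_isBasis :
    @IsTopologicalBasis (FundamentalGroup X x₀) (whTop X x₀)
      { S | ∃ (g : FundamentalGroup X x₀) (U : Set X), IsOpen U ∧ x₀ ∈ U ∧
        S = (fun h => g * h) '' loopClassesIn x₀ U } := by
  letI := whTop X x₀
  refine { exists_subset_inter := ?_, sUnion_eq := ?_, eq_generateFrom := rfl }
  · rintro t₁ ⟨g₁, U₁, hU₁o, hU₁x, rfl⟩ t₂ ⟨g₂, U₂, hU₂o, hU₂x, rfl⟩ x ⟨hx₁, hx₂⟩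
    refine ⟨(fun h => x * h) '' loopClassesIn x₀ (U₁ ∩ U₂),
      ⟨x, U₁ ∩ U₂, hU₁o.inter hU₂o, ⟨hU₁x, hU₂x⟩, rfl⟩,
      ⟨1, one_mem_L ⟨hU₁x, hU₂x⟩, mul_one x⟩, ?_⟩
    intro y hy
    exact ⟨coset_subset hx₁ ((Set.image_mono (L_mono Set.inter_subset_left)) hy),
      coset_subset hx₂ ((Set.image_mono (L_mono Set.inter_subset_right)) hy)⟩
  · ext g
    simp only [Set.mem_sUnion, Set.mem_univ, iff_true]
    exact ⟨_, ⟨g, Set.univ, isOpen_univ, trivial, rfl⟩, 1, one_mem_L trivial, mul_one g⟩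

lemma L_subset_coset {U : Set X} {k : FundamentalGroup X x₀}
    (h1 : (1 : FundamentalGroup X x₀) ∈ (fun h => k * h) '' loopClassesIn x₀ U) :
    loopClassesIn x₀ U ⊆ (fun h => k * h) '' loopClassesIn x₀ U := by
  intro c hc
  rw [mem_coset_iff] at h1 ⊢
  have hk : k⁻¹ ∈ loopClassesIn x₀ U := by simpa using h1
  exact mul_mem_L hk hc

end Helpers

section CharLemma
variable {X : Type*} [TopologicalSpace X] {x₀ : X}

lemma isSLTLAt_iff_conj :
    IsSLTLAt X x₀ ↔ ∀ (a : FundamentalGroup X x₀) (U : Set X), IsOpen U → x₀ ∈ U →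
      ∃ V : Set X, IsOpen V ∧ x₀ ∈ V ∧
        ∀ c ∈ loopClassesIn x₀ V, a⁻¹ * c * a ∈ loopClassesIn x₀ U := by
  constructor
  · intro hS a U hUo hUx
    obtain ⟨α, rfl⟩ := loopClass_surjective a
    obtain ⟨V, hVo, hVx, hV⟩ := hS α U hUo hUx
    refine ⟨V, hVo, hVx, ?_⟩
    rintro c ⟨γ, hγ, rfl⟩
    obtain ⟨γ', hγ', hhom⟩ := hV γ hγ
    exact ⟨γ', hγ', by rw [← loopClass_conj]; exact (loopClass_eq_iff.mpr hhom).symm⟩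
  · intro h α U hUo hUx
    obtain ⟨V, hVo, hVx, hV⟩ := h (loopClass α) U hUo hUx
    refine ⟨V, hVo, hVx, fun γ hγ => ?_⟩
    obtain ⟨γ', hγ', heq⟩ := hV (loopClass γ) ⟨γ, hγ, rfl⟩
    exact ⟨γ', hγ', loopClass_eq_iff.mp (heq.symm.trans (loopClass_conj α γ).symm)⟩

end CharLemma

/-- `X` is SLTL at `x₀` iff `π₁^{wh}(X, x₀)` is a topological group. -/
theorem sltl_iff_wh_topologicalGroup {X : Type*} [TopologicalSpace X] (x₀ : X) :
    IsSLTLAt X x₀ ↔ @IsTopologicalGroup (FundamentalGroup X x₀) (whTop X x₀) _ := by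
  rw [isSLTLAt_iff_conj]
  letI := whTop X x₀
  constructor
  · intro hS
    have hmul : Continuous fun p : FundamentalGroup X x₀ × FundamentalGroup X x₀ =>
        p.1 * p.2 := by
      rw [continuous_iff_continuousAt]
      rintro ⟨g, h⟩
      rw [ContinuousAt, Filter.tendsto_def]
      intro s hs
      rw [whTop_isBasis.mem_nhds_iff] at hs
      obtain ⟨t, ⟨k, U, hUo, hUx, rfl⟩, hmem, hsub⟩ := hs
      obtain ⟨V, hVo, hVx, hV⟩ := hS h U hUo hUx
      rw [nhds_prod_eq, Filter.mem_prod_iff]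
      have hg : ((fun h' => g * h') '' loopClassesIn x₀ V) ∈ nhds g :=
        IsOpen.mem_nhds (TopologicalSpace.GenerateOpen.basic _ ⟨g, V, hVo, hVx, rfl⟩)
          ⟨1, one_mem_L hVx, mul_one g⟩
      have hh : ((fun h' => h * h') '' loopClassesIn x₀ U) ∈ nhds h :=
        IsOpen.mem_nhds (TopologicalSpace.GenerateOpen.basic _ ⟨h, U, hUo, hUx, rfl⟩)
          ⟨1, one_mem_L hUx, mul_one h⟩
      refine ⟨_, hg, _, hh, ?_⟩
      rintro ⟨p₁, p₂⟩ ⟨⟨u, hu, rfl⟩, ⟨v, hv, rfl⟩⟩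
      apply hsub
      apply coset_subset hmem
      simp only [Set.mem_preimage]
      rw [mem_coset_iff]
      have : (g * h)⁻¹ * (g * u * (h * v)) = (h⁻¹ * u * h) * v := by group
      rw [this]
      exact mul_mem_L (hV u hu) hv
    have hinv : Continuous fun g : FundamentalGroup X x₀ => g⁻¹ := by
      rw [continuous_iff_continuousAt]
      intro g
      rw [ContinuousAt, Filter.tendsto_def]
      intro s hs
      rw [whTop_isBasis.mem_nhds_iff] at hs
      obtain ⟨t, ⟨k, U, hUo, hUx, rfl⟩, hmem, hsub⟩ := hs
      obtain ⟨V, hVo, hVx, hV⟩ := hS g⁻¹ U hUo hUx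
      have hg : ((fun h' => g * h') '' loopClassesIn x₀ V) ∈ nhds g :=
        IsOpen.mem_nhds (TopologicalSpace.GenerateOpen.basic _ ⟨g, V, hVo, hVx, rfl⟩)
          ⟨1, one_mem_L hVx, mul_one g⟩
      refine Filter.mem_of_superset hg ?_
      rintro _ ⟨v, hv, rfl⟩
      apply hsub
      apply coset_subset hmem
      simp only [Set.mem_preimage]
      rw [mem_coset_iff]
      have : g⁻¹⁻¹ * (g * v)⁻¹ = g⁻¹⁻¹ * v⁻¹ * g⁻¹ := by group
      rw [this]
      exact hV v⁻¹ (inv_mem_L hv)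
    exact { continuous_mul := hmul, continuous_inv := hinv }
  · intro hTG a U hUo hUx
    haveI := hTG
    have hLopen : IsOpen (loopClassesIn x₀ U) := by
      have : loopClassesIn x₀ U = (fun h => (1 : FundamentalGroup X x₀) * h) ''
          loopClassesIn x₀ U := by
        simp [one_mul]
      exact this ▸ TopologicalSpace.GenerateOpen.basic _ ⟨1, U, hUo, hUx, this.symm ▸ rfl⟩
    have hc : Continuous fun c : FundamentalGroup X x₀ => a⁻¹ * c * a :=
      (continuous_const.mul continuous_id).mul continuous_const
    have hpre : IsOpen ((fun c => a⁻¹ * c * a) ⁻¹' loopClassesIn x₀ U) :=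
      hLopen.preimage hc
    have h1 : (1 : FundamentalGroup X x₀) ∈
        (fun c => a⁻¹ * c * a) ⁻¹' loopClassesIn x₀ U := by
      simp only [Set.mem_preimage, mul_one, inv_mul_cancel]
      exact one_mem_L hUx
    have := whTop_isBasis.mem_nhds_iff.mp (hpre.mem_nhds h1)
    obtain ⟨t, ⟨k, V, hVo, hVx, rfl⟩, hmem, hsub⟩ := this
    exact ⟨V, hVo, hVx, fun c hc => hsub (L_subset_coset hmem hc)⟩
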